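/- Assume Martin's Axiom. Let 𝒞 be a concept class of Borel subsets of a standard Borel space Ω, and suppose every countable subclass of 𝒞 is uniform Glivenko–Cantelli with respect to a family 𝒫 of probability measures, with a common sample complexity bound s(ε, δ). Then every subclass 𝒞' ⊆ 𝒞 of cardinality strictly less than 2^ℵ₀ is uniform Glivenko–Cantelli with respect to 𝒫 with the same sample complexity bound s(ε, δ). -/

import Mathlib

/-- Martin's Axiom: no nonempty compact Hausdorff space with the countable chain
condition is the union of strictly fewer than continuum nowhere dense subsets. -/
def MartinsAxiom : Prop :=
  ∀ (X : Type) [TopologicalSpace X], Nonempty X → CompactSpace X → T2Space X →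
    (∀ s : Set (Set X), (∀ u ∈ s, IsOpen u) → s.PairwiseDisjoint id → s.Countable) →
    ∀ (ι : Type), Cardinal.mk ι < Cardinal.continuum → ∀ f : ι → Set X,
      (∀ i, IsNowhereDense (f i)) → (⋃ i, f i) ≠ Set.univ

open MeasureTheory Set

/-- Empirical measure of the set `C` on a sample `σ` of size `n`. -/
noncomputable def empMeas {Ω : Type*} (n : ℕ) (σ : Fin n → Ω) (C : Set Ω) : ℝ :=
  (Nat.card {i : Fin n // σ i ∈ C} : ℝ) / n

/-- `n₀` is a uniform Glivenko–Cantelli sample-complexity bound for the class `𝒞`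
at accuracy `ε` and confidence `δ`, with respect to the family `P` of measures
(outer probabilities are used for the possibly non-measurable event). -/
def GoodBound {Ω : Type*} [MeasurableSpace Ω] (P : Set (Measure Ω)) (ε δ : ℝ)
    (𝒞 : Set (Set Ω)) (n₀ : ℕ) : Prop :=
  ∀ n : ℕ, n₀ ≤ n → ∀ μ ∈ P,
    (Measure.pi fun _ : Fin n => μ)
      {σ : Fin n → Ω | ε ≤ ⨆ C ∈ 𝒞, |empMeas n σ C - (μ C).toReal|} ≤ ENNReal.ofReal δ


set_option linter.unusedSectionVars false

open scoped ENNReal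


lemma exists_uncountable_fiber {ι β : Type*} [Countable β] {s : Set ι}
    (hs : ¬ s.Countable) (f : ι → β) : ∃ b, ¬ {i | i ∈ s ∧ f i = b}.Countable := by
  by_contra h
  push_neg at h
  exact hs <| Set.Countable.mono
    (fun i hi => Set.mem_iUnion.2 ⟨f i, show i ∈ s ∧ f i = f i from ⟨hi, rfl⟩⟩)
    (Set.countable_iUnion h)

lemma delta_aux {α ι : Type*} [DecidableEq α] : ∀ (n : ℕ) (t : ι → Finset α) (s : Set ι),
    (¬ s.Countable) → (∀ i ∈ s, (t i).card ≤ n) →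
    ∃ s' ⊆ s, ¬ s'.Countable ∧ ∃ R : Finset α,
      ∀ i ∈ s', ∀ j ∈ s', i ≠ j → t i ∩ t j = R := by
  intro n
  induction n with
  | zero =>
    intro t s hs hc
    refine ⟨s, le_refl _, hs, ∅, fun i hi j hj _ => ?_⟩
    have : t i = ∅ := Finset.card_eq_zero.1 (Nat.le_zero.1 (hc i hi))
    simp [this]
  | succ n ih =>
    intro t s hs hc
    by_cases h : ∃ a, ¬ {i | i ∈ s ∧ a ∈ t i}.Countable
    · obtain ⟨a, ha⟩ := h
      obtain ⟨s', hsub, hs', R, hR⟩ := ih (fun i => (t i).erase a) {i | i ∈ s ∧ a ∈ t i} ha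
        (fun i hi => by
          have h1 := hc i hi.1
          show ((t i).erase a).card ≤ n
          rw [Finset.card_erase_of_mem hi.2]
          omega)
      refine ⟨s', fun i hi => (hsub hi).1, hs', insert a R, fun i hi j hj hij => ?_⟩
      have hai : a ∈ t i := (hsub hi).2
      have haj : a ∈ t j := (hsub hj).2
      have heq := hR i hi j hj hij
      ext x
      simp only [Finset.mem_inter, Finset.mem_insert]
      constructor
      · rintro ⟨hxi, hxj⟩
        by_cases hxa : x = a
        · exact Or.inl hxa
        · right
          rw [← heq]
          simp [Finset.mem_erase, hxa, hxi, hxj]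
      · rintro (rfl | hx)
        · exact ⟨hai, haj⟩
        · rw [← heq] at hx
          simp only [Finset.mem_inter, Finset.mem_erase] at hx
          exact ⟨hx.1.2, hx.2.2⟩
    · push_neg at h
      obtain ⟨J, hJmax⟩ := zorn_subset
        {J : Set ι | J ⊆ s ∧ ∀ i ∈ J, ∀ j ∈ J, i ≠ j → t i ∩ t j = ∅}
        (fun c hc hchain => by
          refine ⟨⋃₀ c, ⟨?_, ?_⟩, fun x hx => subset_sUnion_of_mem hx⟩
          · exact sUnion_subset fun J hJ => (hc hJ).1
          · rintro i ⟨Ji, hJi, hiJ⟩ j ⟨Jj, hJj, hjJ⟩ hij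
            rcases hchain.total hJi hJj with hle | hle
            · exact (hc hJj).2 i (hle hiJ) j hjJ hij
            · exact (hc hJi).2 i hiJ j (hle hjJ) hij)
      by_cases hJc : J.Countable
      · exfalso
        set W : Set α := ⋃ j ∈ J, (t j : Set α) with hW
        have hWc : W.Countable := hJc.biUnion fun j _ => (t j).countable_toSet
        set Bad : Set ι := {i | i ∈ s ∧ ∃ j ∈ J, (t i ∩ t j).Nonempty} with hBad
        have hbad : Bad.Countable := by
          have hsub : Bad ⊆ ⋃ a ∈ W, {i | i ∈ s ∧ a ∈ t i} := by
            rintro i ⟨his, j, hj, x, hx⟩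
            simp only [Finset.mem_inter] at hx
            exact mem_biUnion (mem_biUnion hj (by exact_mod_cast hx.2)) ⟨his, hx.1⟩
          exact Set.Countable.mono hsub (hWc.biUnion fun a _ => h a)
        have hnc : ¬ (s \ (Bad ∪ J)).Countable := by
          intro hcon
          refine hs (Set.Countable.mono (fun i hi => ?_) ((hbad.union hJc).union hcon))
          by_cases h1 : i ∈ Bad ∪ J
          · exact Or.inl h1
          · exact Or.inr ⟨hi, h1⟩
        obtain ⟨i₀, hi₀⟩ : (s \ (Bad ∪ J)).Nonempty :=
          Set.nonempty_iff_ne_empty.2 fun hemp => hnc (hemp ▸ countable_empty)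
        have hi₀s : i₀ ∈ s := hi₀.1
        have hi₀n : i₀ ∉ Bad ∪ J := hi₀.2
        have hdisj : ∀ j ∈ J, t i₀ ∩ t j = ∅ := by
          intro j hj
          rw [← Finset.not_nonempty_iff_eq_empty]
          intro hne
          exact hi₀n (Or.inl ⟨hi₀s, j, hj, hne⟩)
        have hJ'in : insert i₀ J ∈
            {J : Set ι | J ⊆ s ∧ ∀ i ∈ J, ∀ j ∈ J, i ≠ j → t i ∩ t j = ∅} := by
          constructor
          · exact insert_subset hi₀s hJmax.prop.1
          · rintro i (rfl | hi) j (rfl | hj) hij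
            · exact absurd rfl hij
            · exact hdisj j hj
            · rw [Finset.inter_comm]; exact hdisj i hi
            · exact hJmax.prop.2 i hi j hj hij
        have : insert i₀ J ⊆ J := hJmax.2 hJ'in (Set.subset_insert _ _)
        exact (fun h => hi₀n (Or.inr h)) (this (Set.mem_insert _ _))
      · exact ⟨J, hJmax.prop.1, hJc, ∅, hJmax.prop.2⟩

lemma delta_system {α ι : Type*} [DecidableEq α] {s : Set ι} (hs : ¬ s.Countable)
    (t : ι → Finset α) :
    ∃ s' ⊆ s, ¬ s'.Countable ∧ ∃ R : Finset α,
      ∀ i ∈ s', ∀ j ∈ s', i ≠ j → t i ∩ t j = R := by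
  obtain ⟨n, hn⟩ := exists_uncountable_fiber hs (fun i => (t i).card)
  obtain ⟨s', hsub, hs', R, hR⟩ := delta_aux n t _ hn (fun i hi => le_of_eq hi.2)
  exact ⟨s', fun i hi => (hsub hi).1, hs', R, hR⟩


section CtrSpace

variable {S : Type*} [MeasurableSpace S] {K : Type*}

/-- `f` is the characteristic function of a "centered" family of indices:
any finite subfamily marked `true` has union of measure `< e`. -/
def Ctr (ν : Measure S) (e : ℝ≥0∞) (π : K → Set S) (f : K → Bool) : Prop :=
  ∀ F : Finset K, (∀ q ∈ F, f q = true) → ν (F.sup π) < e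

/-- The compact space of centered families. -/
def CtrSpace (ν : Measure S) (e : ℝ≥0∞) (π : K → Set S) : Type _ :=
  {f : K → Bool // Ctr ν e π f}

instance (ν : Measure S) (e : ℝ≥0∞) (π : K → Set S) : TopologicalSpace (CtrSpace ν e π) :=
  instTopologicalSpaceSubtype

variable {ν : Measure S} {e : ℝ≥0∞} {π : K → Set S}

lemma ctr_of_finset [DecidableEq K] {F₀ : Finset K} (h : ν (F₀.sup π) < e) :
    Ctr ν e π (fun q => decide (q ∈ F₀)) := by
  intro F hF
  refine lt_of_le_of_lt (measure_mono ?_) h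
  refine Finset.sup_le fun q hq => Finset.le_sup (?_ : q ∈ F₀)
  simpa using hF q hq

lemma ctr_bot (he : 0 < e) : Ctr ν e π (fun _ => false) := by
  intro F hF
  have : F = ∅ := Finset.eq_empty_of_forall_notMem fun q hq => by simpa using hF q hq
  simpa [this] using he

lemma ctr_isClosed : IsClosed {f : K → Bool | Ctr ν e π f} := by
  have : {f : K → Bool | Ctr ν e π f} =
      ⋂ F : Finset K, {f | (∀ q ∈ F, f q = true) → ν (F.sup π) < e} := by
    ext f; simp [Ctr]
  rw [this]
  refine isClosed_iInter fun F => ?_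
  by_cases h : ν (F.sup π) < e
  · simp only [h]
    simp
  · have : {f : K → Bool | (∀ q ∈ F, f q = true) → ν (F.sup π) < e} =
        (⋂ q ∈ F, {f : K → Bool | f q = true})ᶜ := by
      ext f
      simp only [mem_setOf_eq, mem_compl_iff, mem_iInter]
      constructor
      · intro hf hq; exact h (hf hq)
      · intro hf hq; exact absurd hq hf
    rw [this]
    refine IsOpen.isClosed_compl ?_
    refine isOpen_biInter_finset fun q _ => ?_
    exact (isOpen_discrete ({true} : Set Bool)).preimage (continuous_apply (A := fun _ : K => Bool) q)

instance (ν : Measure S) (e : ℝ≥0∞) (π : K → Set S) : CompactSpace (CtrSpace ν e π) := by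
  unfold CtrSpace
  exact isCompact_iff_compactSpace.mp ((ctr_isClosed (ν := ν) (e := e) (π := π)).isCompact)

instance (ν : Measure S) (e : ℝ≥0∞) (π : K → Set S) : T2Space (CtrSpace ν e π) := by
  unfold CtrSpace
  infer_instance

lemma exists_cylinder_subset {u : Set (CtrSpace ν e π)} (hu : IsOpen u)
    {f : CtrSpace ν e π} (hf : f ∈ u) :
    ∃ T : Finset K, {g : CtrSpace ν e π | ∀ q ∈ T, g.1 q = f.1 q} ⊆ u := by
  obtain ⟨V, hV, rfl⟩ := isOpen_induced_iff.1 hu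
  obtain ⟨I, w, h1, h2⟩ := isOpen_pi_iff.1 hV f.1 hf
  refine ⟨I, fun g hg => ?_⟩
  refine h2 (fun q hq => ?_)
  rw [hg q hq]
  exact (h1 q hq).2

end CtrSpace

section Approx

variable {S : Type*} [MeasurableSpace S] [TopologicalSpace S] [SecondCountableTopology S]
  [OpensMeasurableSpace S]

/-- In a second-countable space with a finite Borel measure, there is a countable family
of open sets approximating every open set from inside in measure. -/
lemma exists_countable_approx (ν : Measure S) [IsFiniteMeasure ν] :
    ∃ FB : Set (Set S), FB.Countable ∧ (∀ b ∈ FB, IsOpen b) ∧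
      ∀ U : Set S, IsOpen U → ∀ r : ℝ≥0∞, 0 < r → ∃ b ∈ FB, b ⊆ U ∧ ν (U \ b) < r := by
  obtain ⟨B, hBc, -, hB⟩ := TopologicalSpace.exists_countable_basis S
  refine ⟨{V | ∃ t : Set (Set S), t.Finite ∧ t ⊆ B ∧ V = ⋃₀ t}, ?_, ?_, ?_⟩
  · have : {V | ∃ t : Set (Set S), t.Finite ∧ t ⊆ B ∧ V = ⋃₀ t} ⊆
        Set.sUnion '' {t | t.Finite ∧ t ⊆ B} := by
      rintro V ⟨t, h1, h2, rfl⟩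
      exact ⟨t, ⟨h1, h2⟩, rfl⟩
    exact Set.Countable.mono this ((Set.countable_setOf_finite_subset hBc).image _)
  · rintro b ⟨t, h1, h2, rfl⟩
    exact isOpen_sUnion fun v hv => hB.isOpen (h2 hv)
  · intro U hU r hr
    by_cases hUr : ν U < r
    · refine ⟨∅, ⟨∅, finite_empty, empty_subset _, by simp⟩, empty_subset _, ?_⟩
      rw [diff_empty]; exact hUr
    push_neg at hUr
    set C := {b | b ∈ B ∧ b ⊆ U} with hC
    have hUeq : U = ⋃₀ C := hB.open_eq_sUnion' hU
    have hCne : C.Nonempty := by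
      rcases Set.eq_empty_or_nonempty C with h | h
      · exfalso
        rw [h, sUnion_empty] at hUeq
        rw [hUeq, measure_empty] at hUr
        exact hr.not_ge hUr
      · exact h
    obtain ⟨g, hg⟩ := Set.Countable.exists_eq_range (hBc.mono (fun b hb => hb.1)) hCne
    set V : ℕ → Set S := fun k => ⋃ j ∈ Finset.range (k + 1), g j with hV
    have hVmono : Monotone V := by
      intro a b hab x hx
      simp only [hV, mem_iUnion, Finset.mem_range] at hx ⊢
      obtain ⟨j, hj, hxj⟩ := hx
      exact ⟨j, by omega, hxj⟩
    have hVU : (⋃ k, V k) = U := by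
      rw [hUeq, hg]
      apply subset_antisymm
      · refine iUnion_subset fun k => ?_
        refine iUnion₂_subset fun j _ => ?_
        exact subset_sUnion_of_mem ⟨j, rfl⟩
      · rintro x ⟨b, ⟨j, rfl⟩, hx⟩
        exact mem_iUnion.2 ⟨j, mem_biUnion (Finset.self_mem_range_succ j) hx⟩
    have hsup : ν U = ⨆ k, ν (V k) := by rw [← hVU]; exact hVmono.measure_iUnion
    have hUnetop : ν U ≠ ⊤ := measure_ne_top ν U
    have hlt : ν U - r < ν U := ENNReal.sub_lt_self hUnetop
      (fun h => hr.ne' (le_antisymm (h ▸ hUr) zero_le) ) hr.ne'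
    rw [hsup] at hlt
    obtain ⟨k, hk⟩ := lt_iSup_iff.1 hlt
    refine ⟨V k, ⟨g '' (Finset.range (k+1) : Set ℕ), (Set.toFinite _).image g, ?_, by
      rw [sUnion_image]; rfl⟩, ?_, ?_⟩
    · rintro b ⟨j, hj, rfl⟩
      have : g j ∈ C := by rw [hg]; exact ⟨j, rfl⟩
      exact this.1
    · refine iUnion₂_subset fun j _ => ?_
      have : g j ∈ C := by rw [hg]; exact ⟨j, rfl⟩
      exact this.2
    · have hVmeas : MeasurableSet (V k) := by
        refine (isOpen_biUnion fun j _ => ?_).measurableSet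
        have : g j ∈ C := by rw [hg]; exact ⟨j, rfl⟩
        exact hB.isOpen this.1
      have hVsub : V k ⊆ U := by
        refine iUnion₂_subset fun j _ => ?_
        have : g j ∈ C := by rw [hg]; exact ⟨j, rfl⟩
        exact this.2
      rw [measure_diff hVsub hVmeas.nullMeasurableSet (measure_ne_top ν _)]
      have hVle : ν (V k) ≤ ν U := measure_mono hVsub
      rw [ENNReal.sub_lt_iff_lt_right (ne_top_of_le_ne_top hUnetop hVle) hVle]
      calc ν U = ν U - r + r := (tsub_add_cancel_of_le hUr).symm
        _ < ν (V k) + r := ENNReal.add_lt_add_right (ne_top_of_le_ne_top hUnetop hUr)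
            (by rw [← hsup] at hk; exact hk)
        _ = r + ν (V k) := add_comm _ _
      

end Approx

section CCC

variable {S : Type*} [MeasurableSpace S] {K : Type*}

lemma isOpen_finsup [TopologicalSpace S] {π : K → Set S} (h : ∀ q, IsOpen (π q))
    (F : Finset K) : IsOpen (F.sup π) := by
  induction F using Finset.cons_induction with
  | empty => rw [Finset.sup_empty]; exact isOpen_empty
  | cons q F hq ih => rw [Finset.sup_cons]; exact (h q).union ih

lemma ctr_ccc [TopologicalSpace S] [SecondCountableTopology S] [OpensMeasurableSpace S]
    (ν : Measure S) [IsFiniteMeasure ν] {e : ℝ≥0∞} (he0 : 0 < e) (heT : e ≠ ⊤)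
    (π : K → Set S) (hπ : ∀ q, IsOpen (π q))
    (s : Set (Set (CtrSpace ν e π))) (hso : ∀ u ∈ s, IsOpen u)
    (hsd : s.PairwiseDisjoint id) : s.Countable := by
  classical
  by_contra huncount
  have hetop : e < ⊤ := lt_top_iff_ne_top.2 heT
  set s' := s \ {(∅ : Set (CtrSpace ν e π))} with hs'
  have hs'unc : ¬ s'.Countable := by
    intro h
    refine huncount (Set.Countable.mono (fun u hu => ?_) (h.union (countable_singleton ∅)))
    by_cases h0 : u = ∅
    · exact Or.inr h0
    · exact Or.inl ⟨hu, h0⟩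
  have hdata : ∀ u : Set (CtrSpace ν e π), ∃ (f : CtrSpace ν e π) (T : Finset K),
      u ∈ s' → f ∈ u ∧ {g : CtrSpace ν e π | ∀ q ∈ T, g.1 q = f.1 q} ⊆ u := by
    intro u
    by_cases hu : u ∈ s'
    · have hne : u.Nonempty := nonempty_iff_ne_empty.2 hu.2
      obtain ⟨f, hf⟩ := hne
      obtain ⟨T, hT⟩ := exists_cylinder_subset (hso u hu.1) hf
      exact ⟨f, T, fun _ => ⟨hf, hT⟩⟩
    · exact ⟨⟨fun _ => false, ctr_bot he0⟩, ∅, fun h => absurd h hu⟩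
  choose pt T hpt using hdata
  set F : Set (CtrSpace ν e π) → Finset K :=
    fun u => (T u).filter (fun q => (pt u).1 q = true) with hF
  set G : Set (CtrSpace ν e π) → Finset K :=
    fun u => (T u).filter (fun q => (pt u).1 q = false) with hG
  set U : Set (CtrSpace ν e π) → Set S := fun u => (F u).sup π with hU
  have hFGdisj : ∀ u q, q ∈ F u → q ∈ G u → False := by
    intro u q h1 h2
    have e1 := (Finset.mem_filter.1 h1).2
    have e2 := (Finset.mem_filter.1 h2).2
    rw [e1] at e2
    exact Bool.noConfusion e2
  have hUlt : ∀ u, ν (U u) < e :=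
    fun u => (pt u).2 (F u) (fun q hq => (Finset.mem_filter.1 hq).2)
  have hUne : ∀ u, ν (U u) ≠ ⊤ := fun u => ((hUlt u).trans hetop).ne
  have hUopen : ∀ u, IsOpen (U u) := fun u => isOpen_finsup hπ _
  -- choose scales
  have hn : ∀ u, ∃ n : ℕ, ν (U u) + (((n : ℝ≥0∞)) + 1)⁻¹ < e := by
    intro u
    have hgap : e - ν (U u) ≠ 0 := by
      rw [← pos_iff_ne_zero, tsub_pos_iff_lt]
      exact hUlt u
    obtain ⟨m, hm⟩ := ENNReal.exists_inv_nat_lt hgap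
    refine ⟨m, ?_⟩
    have h1 : ((m : ℝ≥0∞) + 1)⁻¹ ≤ ((m : ℝ≥0∞))⁻¹ :=
      ENNReal.inv_le_inv.2 le_self_add
    calc ν (U u) + ((m : ℝ≥0∞) + 1)⁻¹ ≤ ν (U u) + ((m : ℝ≥0∞))⁻¹ :=
          add_le_add_right h1 _
      _ < ν (U u) + (e - ν (U u)) := ENNReal.add_lt_add_left (hUne u) hm
      _ = e := add_tsub_cancel_of_le (hUlt u).le
  choose n hn using hn
  -- approximations from the countable family
  obtain ⟨FB, hFBc, hFBopen, hFBapprox⟩ := exists_countable_approx ν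
  have hbex : ∀ u, ∃ b, b ∈ FB ∧ b ⊆ U u ∧
      ν (U u \ b) < (2 * ((n u : ℝ≥0∞) + 1))⁻¹ := by
    intro u
    have hpos : (0 : ℝ≥0∞) < (2 * ((n u : ℝ≥0∞) + 1))⁻¹ := by
      rw [ENNReal.inv_pos]
      exact ENNReal.mul_ne_top (by norm_num)
        (by simp [ENNReal.add_eq_top, ENNReal.natCast_ne_top])
    obtain ⟨b, h1, h2, h3⟩ := hFBapprox (U u) (hUopen u) _ hpos
    exact ⟨b, h1, h2, h3⟩
  choose b hbFB hbsub hbm using hbex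
  -- the pairwise alternative from disjointness
  have halt : ∀ u ∈ s', ∀ v ∈ s', u ≠ v → ν (U u ∪ U v) < e →
      ((F u ∩ G v).Nonempty ∨ (F v ∩ G u).Nonempty) := by
    intro u hu v hv huv hUe
    by_contra hcon
    push_neg at hcon
    obtain ⟨hFG1, hFG2⟩ := hcon
    set g : K → Bool := fun q => decide (q ∈ F u ∪ F v) with hgdef
    have hctr : Ctr ν e π g := ctr_of_finset (by
      rw [Finset.sup_union]
      exact hUe)
    have hmem : ∀ w, w ∈ s' → F w ⊆ F u ∪ F v → (∀ q ∈ G w, q ∉ F u ∪ F v) →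
        (⟨g, hctr⟩ : CtrSpace ν e π) ∈ w := by
      intro w hw hFsub hGout
      refine (hpt w hw).2 ?_
      intro q hq
      cases hb : (pt w).1 q with
      | true =>
        have hqF : q ∈ F w := Finset.mem_filter.2 ⟨hq, hb⟩
        simp only [hgdef, hb]
        rw [decide_eq_true_eq]
        exact hFsub hqF
      | false =>
        have hqG : q ∈ G w := Finset.mem_filter.2 ⟨hq, hb⟩
        simp only [hgdef, hb]
        rw [decide_eq_false_iff_not]
        exact hGout q hqG
    have hgu : (⟨g, hctr⟩ : CtrSpace ν e π) ∈ u := by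
      refine hmem u hu Finset.subset_union_left ?_
      intro q hqG hqFF
      rcases Finset.mem_union.1 hqFF with h | h
      · exact hFGdisj u q h hqG
      · have : q ∈ F v ∩ G u := Finset.mem_inter.2 ⟨h, hqG⟩
        rw [hFG2] at this
        exact absurd this (Finset.notMem_empty q)
    have hgv : (⟨g, hctr⟩ : CtrSpace ν e π) ∈ v := by
      refine hmem v hv Finset.subset_union_right ?_
      intro q hqG hqFF
      rcases Finset.mem_union.1 hqFF with h | h
      · have : q ∈ F u ∩ G v := Finset.mem_inter.2 ⟨h, hqG⟩
        rw [hFG1] at this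
        exact absurd this (Finset.notMem_empty q)
      · exact hFGdisj v q h hqG
    exact Set.disjoint_left.1 (hsd hu.1 hv.1 huv) hgu hgv
  -- pigeonhole on (b, n)
  haveI : Countable ↥FB := hFBc.to_subtype
  obtain ⟨⟨b₀, n₀⟩, hfib⟩ := exists_uncountable_fiber hs'unc
    (fun u => ((⟨b u, hbFB u⟩ : ↥FB), n u))
  set s2 := {u | u ∈ s' ∧ ((⟨b u, hbFB u⟩ : ↥FB), n u) = (b₀, n₀)} with hs2
  have hs2sub : s2 ⊆ s' := fun u hu => hu.1
  have hs2b : ∀ u ∈ s2, b u = ↑b₀ ∧ n u = n₀ := by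
    intro u hu
    have h1 := congrArg Prod.fst hu.2
    have h2 := congrArg Prod.snd hu.2
    exact ⟨congrArg Subtype.val h1, h2⟩
  have hcompat : ∀ u ∈ s2, ∀ v ∈ s2, ν (U u ∪ U v) < e := by
    intro u hu v hv
    obtain ⟨hbu, hnu⟩ := hs2b u hu
    obtain ⟨hbv, hnv⟩ := hs2b v hv
    have hsub : U u ∪ U v ⊆ U u ∪ (U v \ b v) := by
      rintro x (hx | hx)
      · exact Or.inl hx
      · by_cases hxb : x ∈ b v
        · refine Or.inl (hbsub u ?_)
          rw [hbu]
          rw [hbv] at hxb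
          exact hxb
        · exact Or.inr ⟨hx, hxb⟩
    calc ν (U u ∪ U v) ≤ ν (U u ∪ (U v \ b v)) := measure_mono hsub
      _ ≤ ν (U u) + ν (U v \ b v) := measure_union_le _ _
      _ < ν (U u) + ((n u : ℝ≥0∞) + 1)⁻¹ := by
          refine ENNReal.add_lt_add_left (hUne u) (lt_of_lt_of_le (hbm v) ?_)
          rw [hnv, ← hnu]
          refine ENNReal.inv_le_inv.2 ?_
          calc ((n u : ℝ≥0∞) + 1) = 1 * ((n u : ℝ≥0∞) + 1) := (one_mul _).symm
            _ ≤ 2 * ((n u : ℝ≥0∞) + 1) := by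
                refine mul_le_mul_left (by norm_num) _
      _ < e := hn u
  -- Δ-system
  obtain ⟨s3, hs3sub, hs3unc, R, hR⟩ := delta_system hfib (fun u => F u ∪ G u)
  -- pigeonhole on the trace on the root
  haveI : Countable ↥((R.powerset ×ˢ R.powerset : Finset (Finset K × Finset K)) :
      Set (Finset K × Finset K)) := (Finset.countable_toSet _).to_subtype
  have htrace : ∀ u : Set (CtrSpace ν e π),
      (F u ∩ R, G u ∩ R) ∈ (R.powerset ×ˢ R.powerset : Finset (Finset K × Finset K)) := by
    intro u
    rw [Finset.mem_product]
    exact ⟨Finset.mem_powerset.2 Finset.inter_subset_right,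
      Finset.mem_powerset.2 Finset.inter_subset_right⟩
  obtain ⟨⟨⟨FR, GR⟩, hFRGR⟩, hfib2⟩ := exists_uncountable_fiber hs3unc
    (fun u => (⟨(F u ∩ R, G u ∩ R), htrace u⟩ :
      ↥((R.powerset ×ˢ R.powerset : Finset (Finset K × Finset K)) :
        Set (Finset K × Finset K))))
  set s4 := {u | u ∈ s3 ∧ (⟨(F u ∩ R, G u ∩ R), htrace u⟩ :
      ↥((R.powerset ×ˢ R.powerset : Finset (Finset K × Finset K)) :
        Set (Finset K × Finset K))) = ⟨(FR, GR), hFRGR⟩} with hs4def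
  have hs4unc : ¬ s4.Countable := hfib2
  have hs4tr : ∀ u ∈ s4, F u ∩ R = FR ∧ G u ∩ R = GR := by
    intro u hu
    have h := congrArg Subtype.val hu.2
    exact ⟨congrArg Prod.fst h, congrArg Prod.snd h⟩
  have h2 : ∃ u ∈ s4, ∃ v ∈ s4, u ≠ v := by
    by_contra hcon
    push_neg at hcon
    exact hs4unc (Set.Subsingleton.countable (fun u hu v hv => hcon u hu v hv))
  obtain ⟨u, hu4, v, hv4, huv⟩ := h2
  have hu3 : u ∈ s3 := hu4.1
  have hv3 : v ∈ s3 := hv4.1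
  have hu2 : u ∈ s2 := hs3sub hu3
  have hv2 : v ∈ s2 := hs3sub hv3
  have hcp := hcompat u hu2 v hv2
  have ha := halt u (hs2sub hu2) v (hs2sub hv2) huv hcp
  obtain ⟨hFu, hGu⟩ := hs4tr u hu4
  obtain ⟨hFv, hGv⟩ := hs4tr v hv4
  rcases ha with ⟨x, hx⟩ | ⟨x, hx⟩
  · obtain ⟨hxFu, hxGv⟩ := Finset.mem_inter.1 hx
    have hroot := hR u hu3 v hv3 huv
    have hxR : x ∈ R := by
      rw [← hroot]
      exact Finset.mem_inter.2 ⟨Finset.mem_union_left _ hxFu, Finset.mem_union_right _ hxGv⟩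
    have hxFR : x ∈ FR := by
      rw [← hFu]; exact Finset.mem_inter.2 ⟨hxFu, hxR⟩
    have hxFv : x ∈ F v := by
      have : x ∈ F v ∩ R := by rw [hFv]; exact hxFR
      exact (Finset.mem_inter.1 this).1
    exact hFGdisj v x hxFv hxGv
  · obtain ⟨hxFv, hxGu⟩ := Finset.mem_inter.1 hx
    have hroot := hR v hv3 u hu3 huv.symm
    have hxR : x ∈ R := by
      rw [← hroot]
      exact Finset.mem_inter.2 ⟨Finset.mem_union_left _ hxFv, Finset.mem_union_right _ hxGu⟩
    have hxFR : x ∈ FR := by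
      rw [← hFv]; exact Finset.mem_inter.2 ⟨hxFv, hxR⟩
    have hxFu : x ∈ F u := by
      have : x ∈ F u ∩ R := by rw [hFu]; exact hxFR
      exact (Finset.mem_inter.1 this).1
    exact hFGdisj u x hxFu hxGu

end CCC

section MANull

/-- Under Martin's axiom, a finite Borel measure on a standard Borel space is
`continuum`-additive: a union of fewer than continuum many null sets is null. -/
lemma ma_null (hMA : MartinsAxiom) (S : Type) [MeasurableSpace S] [StandardBorelSpace S]
    (ν : Measure S) [IsFiniteMeasure ν] (ι : Type) (hι : Cardinal.mk ι < Cardinal.continuum)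
    (N : ι → Set S) (hN : ∀ i, ν (N i) = 0) : ν (⋃ i, N i) = 0 := by
  classical
  letI := upgradeStandardBorel S
  have main : ∀ e : ℝ≥0∞, 0 < e → e ≠ ⊤ → ν (⋃ i, N i) ≤ e := by
    intro e he0 heT
    have hetop : e < ⊤ := lt_top_iff_ne_top.2 heT
    -- witness function enlarging an open set to cover a null set
    have hwex : ∀ (U : Set S) (i : ι), ∃ V : Set S,
        (IsOpen U ∧ ν U < e) → (IsOpen V ∧ ν V < e ∧ U ∪ N i ⊆ V) := by
      intro U i
      by_cases h : IsOpen U ∧ ν U < e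
      · have hgap : ν (N i) < e - ν U := by
          rw [hN i]
          exact tsub_pos_iff_lt.2 h.2
        obtain ⟨W, hNW, hWopen, hWlt⟩ := Set.exists_isOpen_lt_of_lt _ _ hgap
        refine ⟨U ∪ W, fun _ => ⟨h.1.union hWopen, ?_, ?_⟩⟩
        · calc ν (U ∪ W) ≤ ν U + ν W := measure_union_le _ _
            _ < ν U + (e - ν U) :=
              ENNReal.add_lt_add_left ((h.2.trans hetop).ne) hWlt
            _ = e := add_tsub_cancel_of_le h.2.le
        · exact Set.union_subset_union (subset_refl U) hNW
      · exact ⟨∅, fun hc => absurd hc h⟩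
    choose w hw using hwex
    -- the collection of open sets of small measure
    set QQ : Set (Set S) := {U | IsOpen U ∧ ν U < e} with hQQ
    set K := (↥QQ × ℕ) with hK
    set π : K → Set S := fun q => (q.1 : Set S) with hπ
    have hπopen : ∀ q : K, IsOpen (π q) := fun q => q.1.2.1
    have hsupQQ : ∀ F : Finset K, ν (F.sup π) < e → F.sup π ∈ QQ :=
      fun F hF => ⟨isOpen_finsup hπopen F, hF⟩
    set X := CtrSpace ν e π with hX
    set Xi : ι → Set X := fun i => {f : X | ∀ q : K, N i ⊆ π q → f.1 q = false} with hXi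
    have hXiclosed : ∀ i, IsClosed (Xi i) := by
      intro i
      have hrw : Xi i = ⋂ q : K, {f : X | N i ⊆ π q → f.1 q = false} := by
        ext f; simp [hXi]
      rw [hrw]
      refine isClosed_iInter fun q => ?_
      by_cases h : N i ⊆ π q
      · have hrw2 : {f : X | N i ⊆ π q → f.1 q = false} =
            (fun f : X => f.1 q) ⁻¹' {false} := by
          ext f; simp [h]
        rw [hrw2]
        exact (isClosed_discrete _).preimage
          ((continuous_apply (A := fun _ : K => Bool) q).comp continuous_subtype_val)
      · have hrw2 : {f : X | N i ⊆ π q → f.1 q = false} = univ := by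
          ext f; simp [h]
        rw [hrw2]
        exact isClosed_univ
    have hXind : ∀ i, IsNowhereDense (Xi i) := by
      intro i
      show interior (closure (Xi i)) = ∅
      rw [(hXiclosed i).closure_eq, eq_empty_iff_forall_notMem]
      intro f hf
      obtain ⟨T, hT⟩ := exists_cylinder_subset isOpen_interior hf
      set F₀ : Finset K := T.filter (fun q => f.1 q = true) with hF₀
      have hU₀lt : ν (F₀.sup π) < e := f.2 F₀ (fun q hq => (Finset.mem_filter.1 hq).2)
      have hU₀QQ : F₀.sup π ∈ QQ := hsupQQ F₀ hU₀lt
      have hV := hw (F₀.sup π) i ⟨hU₀QQ.1, hU₀lt⟩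
      have hVQQ : w (F₀.sup π) i ∈ QQ := ⟨hV.1, hV.2.1⟩
      obtain ⟨m, hm⟩ := Infinite.exists_notMem_finset (T.image Prod.snd)
      set qs : K := (⟨w (F₀.sup π) i, hVQQ⟩, m) with hqs
      have hqsT : qs ∉ T := fun h => hm (Finset.mem_image_of_mem Prod.snd h)
      set g : K → Bool := fun q => decide (q ∈ insert qs F₀) with hg
      have hctr : Ctr ν e π g := by
        refine ctr_of_finset ?_
        rw [Finset.sup_insert]
        have hsub : π qs ⊔ F₀.sup π ⊆ w (F₀.sup π) i :=
          union_subset (subset_refl _) (union_subset_iff.1 hV.2.2).1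
        exact lt_of_le_of_lt (measure_mono hsub) hV.2.1
      have hgcyl : (⟨g, hctr⟩ : X) ∈ {gg : X | ∀ q ∈ T, gg.1 q = f.1 q} := by
        intro q hq
        cases hb : f.1 q with
        | true =>
          have hqF : q ∈ F₀ := Finset.mem_filter.2 ⟨hq, hb⟩
          simp only [hg]
          rw [decide_eq_true_eq]
          exact Finset.mem_insert_of_mem hqF
        | false =>
          simp only [hg]
          rw [decide_eq_false_iff_not]
          intro hmem
          rcases Finset.mem_insert.1 hmem with rfl | hmem
          · exact hqsT hq
          · rw [(Finset.mem_filter.1 hmem).2] at hb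
            exact Bool.noConfusion hb
      have hXimem : (⟨g, hctr⟩ : X) ∈ Xi i := interior_subset (hT hgcyl)
      have hNq : N i ⊆ π qs := (union_subset_iff.1 hV.2.2).2
      have := hXimem qs hNq
      simp only [hg] at this
      rw [decide_eq_false_iff_not] at this
      exact this (Finset.mem_insert_self _ _)
    -- apply Martin's axiom
    haveI : Nonempty X := ⟨⟨fun _ => false, ctr_bot he0⟩⟩
    have hne := hMA X inferInstance inferInstance inferInstance
      (fun s hso hsd => ctr_ccc ν he0 heT π hπopen s hso hsd) ι hι Xi hXind
    obtain ⟨fgen, hfgen⟩ : ∃ f : X, f ∉ ⋃ i, Xi i := by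
      by_contra hcon
      push_neg at hcon
      exact hne (Set.eq_univ_iff_forall.2 hcon)
    have hsel : ∀ i, ∃ q : K, N i ⊆ π q ∧ fgen.1 q = true := by
      intro i
      have hfi : fgen ∉ Xi i := fun h => hfgen (mem_iUnion.2 ⟨i, h⟩)
      rw [hXi] at hfi
      simp only [mem_setOf_eq, not_forall] at hfi
      obtain ⟨q, hq1, hq2⟩ := hfi
      exact ⟨q, hq1, by
        cases hb : fgen.1 q with
        | true => rfl
        | false => exact absurd hb hq2⟩
    set 𝒰 : Set (Set S) := {V | ∃ q : K, fgen.1 q = true ∧ π q = V} with h𝒰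
    have h𝒰open : ∀ V ∈ 𝒰, IsOpen V := by
      rintro V ⟨q, -, rfl⟩
      exact hπopen q
    have hNsub : (⋃ i, N i) ⊆ ⋃₀ 𝒰 := by
      refine iUnion_subset fun i => ?_
      obtain ⟨q, hq1, hq2⟩ := hsel i
      exact subset_trans hq1 (subset_sUnion_of_mem ⟨q, hq2, rfl⟩)
    have hWle : ν (⋃₀ 𝒰) ≤ e := by
      obtain ⟨Tc, hTcc, hTcsub, hTceq⟩ := TopologicalSpace.isOpen_sUnion_countable 𝒰 h𝒰open
      rw [← hTceq]
      rcases Set.eq_empty_or_nonempty Tc with rfl | hTne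
      · simp
      obtain ⟨gE, hgE⟩ := hTcc.exists_eq_range hTne
      rw [hgE, Set.sUnion_range]
      have hsel2 : ∀ j : ℕ, ∃ q : K, fgen.1 q = true ∧ π q = gE j := by
        intro j
        exact hTcsub (by rw [hgE]; exact ⟨j, rfl⟩)
      choose qsel hqsel1 hqsel2 using hsel2
      set V : ℕ → Set S := fun k => ⋃ j ∈ Finset.range (k + 1), gE j with hV
      have hVlt : ∀ k, ν (V k) < e := by
        intro k
        have hVeq : V k = ((Finset.range (k+1)).image qsel).sup π := by
          rw [Finset.sup_image]
          rw [Finset.sup_set_eq_biUnion]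
          exact Set.iUnion₂_congr (fun j _ => (hqsel2 j).symm)
        rw [hVeq]
        exact fgen.2 _ (fun q hq => by
          obtain ⟨j, hj, rfl⟩ := Finset.mem_image.1 hq
          exact hqsel1 j)
      have hVmono : Monotone V := by
        intro a c hac x hx
        simp only [hV, mem_iUnion, Finset.mem_range] at hx ⊢
        obtain ⟨j, hj, hxj⟩ := hx
        exact ⟨j, by omega, hxj⟩
      have hVU : (⋃ k, V k) = ⋃ j, gE j := by
        apply subset_antisymm
        · exact iUnion_subset fun k => iUnion₂_subset fun j _ => subset_iUnion gE j
        · exact iUnion_subset fun j =>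
            subset_iUnion_of_subset j (subset_biUnion_of_mem (Finset.self_mem_range_succ j))
      rw [← hVU, hVmono.measure_iUnion]
      exact iSup_le fun k => (hVlt k).le
    exact le_trans (measure_mono hNsub) hWle
  refine le_antisymm ?_ zero_le
  by_contra hcon
  push_neg at hcon
  obtain ⟨m, hm⟩ := ENNReal.exists_inv_nat_lt (pos_iff_ne_zero.1 hcon)
  have h1 : ν (⋃ i, N i) ≤ ((m : ℝ≥0∞) + 1)⁻¹ := by
    refine main _ ?_ ?_
    · rw [ENNReal.inv_pos]
      simp [ENNReal.add_eq_top, ENNReal.natCast_ne_top]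
    · rw [Ne, ENNReal.inv_eq_top]
      simp
  have h2 : ((m : ℝ≥0∞) + 1)⁻¹ ≤ ((m : ℝ≥0∞))⁻¹ := ENNReal.inv_le_inv.2 le_self_add
  exact absurd (lt_of_le_of_lt (h1.trans h2) hm) (lt_irrefl _)

end MANull

section Glue

open scoped Classical

lemma empMeas_eq_sum {Ω : Type*} (n : ℕ) (σ : Fin n → Ω) (C : Set Ω) :
    empMeas n σ C = (∑ i : Fin n, if σ i ∈ C then (1 : ℝ) else 0) / n := by
  classical
  rw [empMeas, Nat.card_eq_fintype_card, Fintype.card_subtype, Finset.card_filter]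
  congr 1
  rw [Nat.cast_sum]
  exact Finset.sum_congr rfl (fun i _ => by
    by_cases h : σ i ∈ C <;> simp [h])

lemma empMeas_measurable {Ω : Type*} [MeasurableSpace Ω] {C : Set Ω} (hC : MeasurableSet C)
    (n : ℕ) : Measurable fun σ : Fin n → Ω => empMeas n σ C := by
  simp only [empMeas_eq_sum]
  refine Measurable.div_const ?_ _
  refine Finset.measurable_sum _ fun i _ => ?_
  exact Measurable.ite (measurable_pi_apply i hC) measurable_const measurable_const

lemma empMeas_nonneg {Ω : Type*} {n : ℕ} {σ : Fin n → Ω} {C : Set Ω} :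
    0 ≤ empMeas n σ C :=
  div_nonneg (Nat.cast_nonneg _) (Nat.cast_nonneg _)

lemma empMeas_le_one {Ω : Type*} {n : ℕ} {σ : Fin n → Ω} {C : Set Ω} :
    empMeas n σ C ≤ 1 := by
  rcases Nat.eq_zero_or_pos n with rfl | hn
  · simp [empMeas]
  · rw [empMeas, div_le_one (by exact_mod_cast hn)]
    have : Nat.card {i : Fin n // σ i ∈ C} ≤ Nat.card (Fin n) :=
      Nat.card_le_card_of_injective Subtype.val Subtype.val_injective
    rw [Nat.card_eq_fintype_card (α := Fin n), Fintype.card_fin] at this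
    exact_mod_cast this

lemma real_le_of_forall_sub {a S : ℝ} (h : ∀ k : ℕ, a - 1 / ((k : ℝ) + 1) ≤ S) : a ≤ S := by
  by_contra hc
  push_neg at hc
  obtain ⟨k, hk⟩ := exists_nat_one_div_lt (sub_pos.2 hc)
  have := h k
  linarith

end Glue

lemma real_iSup_of_isEmpty {ι : Sort*} [IsEmpty ι] (f : ι → ℝ) : (⨆ i, f i) = 0 := by
  rw [iSup, Set.range_eq_empty, Real.sSup_empty]


/-- under MA, if every countable subclass of a class `𝒞` of Borel sets
in a standard Borel space is uniform Glivenko–Cantelli with common sample complexity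
`s ε δ`, then so is every subclass of cardinality strictly less than continuum. -/
theorem small_subclasses_ugc_of_countable_ugc (hMA : MartinsAxiom)
    {Ω : Type} [MeasurableSpace Ω] [StandardBorelSpace Ω]
    (𝒞 : Set (Set Ω)) (hBorel : ∀ C ∈ 𝒞, MeasurableSet C)
    (P : Set (Measure Ω)) (hP : ∀ μ ∈ P, IsProbabilityMeasure μ)
    (s : ℝ → ℝ → ℕ)
    (hctble : ∀ 𝒞' ⊆ 𝒞, 𝒞'.Countable →
      ∀ ε : ℝ, 0 < ε → ∀ δ : ℝ, 0 < δ → GoodBound P ε δ 𝒞' (s ε δ)) :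
    ∀ 𝒞' ⊆ 𝒞, Cardinal.mk ↥𝒞' < Cardinal.continuum →
      ∀ ε : ℝ, 0 < ε → ∀ δ : ℝ, 0 < δ → GoodBound P ε δ 𝒞' (s ε δ) := by
  intro 𝒞' hsub hcard ε hε δ hδ n hn μ hμ
  haveI hPμ : IsProbabilityMeasure μ := hP μ hμ
  set ν : Measure (Fin n → Ω) := Measure.pi (fun _ : Fin n => μ) with hνdef
  haveI : IsProbabilityMeasure ν := by rw [hνdef]; infer_instance
  set v : (Fin n → Ω) → Set Ω → ℝ := fun σ C => |empMeas n σ C - (μ C).toReal| with hv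
  have hv2 : ∀ σ C, v σ C ≤ 2 := by
    intro σ C
    have h1 : |empMeas n σ C| ≤ 1 :=
      abs_le.2 ⟨by linarith [empMeas_nonneg (n := n) (σ := σ) (C := C)], empMeas_le_one⟩
    have h2 : |(μ C).toReal| ≤ 1 := by
      rw [abs_of_nonneg ENNReal.toReal_nonneg]
      calc (μ C).toReal ≤ (1 : ℝ≥0∞).toReal := ENNReal.toReal_mono ENNReal.one_ne_top prob_le_one
        _ = 1 := by simp
    calc v σ C = |empMeas n σ C + -(μ C).toReal| := by
          simp only [hv]
          rw [sub_eq_add_neg]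
      _ ≤ |empMeas n σ C| + |-(μ C).toReal| := abs_add_le _ _
      _ = |empMeas n σ C| + |(μ C).toReal| := by rw [abs_neg]
      _ ≤ 2 := by linarith
  have hv0 : ∀ σ C, 0 ≤ v σ C := fun σ C => abs_nonneg _
  have hbdd : ∀ (σ : Fin n → Ω) (𝒟 : Set (Set Ω)),
      BddAbove (Set.range fun C => ⨆ _ : C ∈ 𝒟, v σ C) := by
    intro σ 𝒟
    refine ⟨2, ?_⟩
    rintro x ⟨C, rfl⟩
    exact Real.iSup_le (fun _ => hv2 σ C) (by norm_num)
  have hle_sup : ∀ (σ : Fin n → Ω) (𝒟 : Set (Set Ω)) (C : Set Ω), C ∈ 𝒟 →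
      v σ C ≤ ⨆ C ∈ 𝒟, v σ C := by
    intro σ 𝒟 C hC
    refine le_ciSup_of_le (hbdd σ 𝒟) C ?_
    rw [ciSup_pos hC]
  have hsup_lt : ∀ (σ : Fin n → Ω) (𝒟 : Set (Set Ω)) (t : ℝ), 0 ≤ t →
      t < (⨆ C ∈ 𝒟, v σ C) → ∃ C ∈ 𝒟, t < v σ C := by
    intro σ 𝒟 t ht hlt
    obtain ⟨C, hC⟩ := (lt_ciSup_iff (hbdd σ 𝒟)).1 hlt
    by_cases hmem : C ∈ 𝒟
    · rw [ciSup_pos hmem] at hC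
      exact ⟨C, hmem, hC⟩
    · exfalso
      haveI : IsEmpty (C ∈ 𝒟) := ⟨hmem⟩
      rw [real_iSup_of_isEmpty] at hC
      exact absurd (ht.trans_lt hC) (lt_irrefl _)
  rcases Set.eq_empty_or_nonempty 𝒞' with rfl | hCne
  · have hempty : {σ : Fin n → Ω |
        ε ≤ ⨆ C ∈ (∅ : Set (Set Ω)), |empMeas n σ C - (μ C).toReal|} = ∅ := by
      rw [Set.eq_empty_iff_forall_notMem]
      intro σ hσ
      simp only [mem_setOf_eq] at hσ
      have hzero : (⨆ C ∈ (∅ : Set (Set Ω)), |empMeas n σ C - (μ C).toReal|) = 0 := by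
        have : ∀ C : Set Ω, (⨆ _ : C ∈ (∅ : Set (Set Ω)), |empMeas n σ C - (μ C).toReal|)
            = 0 := by
          intro C
          haveI : IsEmpty (C ∈ (∅ : Set (Set Ω))) := ⟨fun h => h⟩
          exact real_iSup_of_isEmpty _
        simp only [this]
        exact ciSup_const
      rw [hzero] at hσ
      linarith
    rw [hempty]
    simp
  · -- main case
    set A : ℕ → ↥𝒞' → Set (Fin n → Ω) :=
      fun k C => {σ | ε - 1 / ((k : ℝ) + 1) < v σ (C : Set Ω)} with hA
    have hAmeas : ∀ k C, MeasurableSet (A k C) := by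
      intro k C
      have hCB : MeasurableSet (C : Set Ω) := hBorel _ (hsub C.2)
      have hm : Measurable fun σ : Fin n → Ω => v σ (C : Set Ω) :=
        ((empMeas_measurable hCB n).sub measurable_const).abs
      exact measurableSet_lt measurable_const hm
    have hEeq : {σ : Fin n → Ω | ε ≤ ⨆ C ∈ 𝒞', |empMeas n σ C - (μ C).toReal|}
        = ⋂ k : ℕ, ⋃ C : ↥𝒞', A k C := by
      ext σ
      simp only [mem_setOf_eq, mem_iInter, mem_iUnion]
      constructor
      · intro hσ k
        by_cases hkε : 0 ≤ ε - 1 / ((k : ℝ) + 1)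
        · have hlt : ε - 1 / ((k : ℝ) + 1) < ⨆ C ∈ 𝒞', v σ C := by
            have h1 : (0 : ℝ) < 1 / ((k : ℝ) + 1) := by positivity
            have h2 : ε - 1 / ((k : ℝ) + 1) < ε := by linarith
            exact lt_of_lt_of_le h2 hσ
          obtain ⟨C, hC, hCv⟩ := hsup_lt σ 𝒞' _ hkε hlt
          exact ⟨⟨C, hC⟩, hCv⟩
        · push_neg at hkε
          obtain ⟨C₀, hC₀⟩ := hCne
          exact ⟨⟨C₀, hC₀⟩, lt_of_lt_of_le hkε (hv0 σ C₀)⟩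
      · intro h
        refine real_le_of_forall_sub (fun k => ?_)
        obtain ⟨C, hC⟩ := h k
        exact le_trans (le_of_lt hC) (hle_sup σ 𝒞' C C.2)
    -- maximal countable subfamilies
    have hmax : ∀ k : ℕ, ∃ D : Set ↥𝒞', D.Countable ∧
        ∀ C : ↥𝒞', ν (A k C \ ⋃ C' ∈ D, A k C') = 0 := by
      intro k
      set M : ℝ≥0∞ := ⨆ D : {D : Set ↥𝒞' // D.Countable}, ν (⋃ C ∈ D.1, A k C) with hM
      have hMle : ∀ D : Set ↥𝒞', D.Countable → ν (⋃ C ∈ D, A k C) ≤ M := fun D hD =>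
        le_iSup (fun D : {D : Set ↥𝒞' // D.Countable} => ν (⋃ C ∈ D.1, A k C)) ⟨D, hD⟩
      have hMne : M ≠ ⊤ := by
        refine ne_top_of_le_ne_top (measure_ne_top ν univ) ?_
        exact iSup_le fun D => measure_mono (subset_univ _)
      obtain ⟨D₀, hD₀c, hD₀⟩ : ∃ D : Set ↥𝒞', D.Countable ∧ ν (⋃ C ∈ D, A k C) = M := by
        rcases eq_or_ne M 0 with hM0 | hM0
        · refine ⟨∅, countable_empty, ?_⟩
          rw [hM0]
          simp
        · have hsel : ∀ j : ℕ, ∃ D : {D : Set ↥𝒞' // D.Countable},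
              M - ((j : ℝ≥0∞) + 1)⁻¹ < ν (⋃ C ∈ D.1, A k C) := by
            intro j
            have hlt : M - ((j : ℝ≥0∞) + 1)⁻¹ < M := ENNReal.sub_lt_self hMne hM0 (by
              rw [Ne, ENNReal.inv_eq_zero]
              simp [ENNReal.add_eq_top, ENNReal.natCast_ne_top])
            exact lt_iSup_iff.1 hlt
          choose Ds hDs using hsel
          have hDscount : (⋃ j, (Ds j).1).Countable := countable_iUnion fun j => (Ds j).2
          refine ⟨⋃ j, (Ds j).1, hDscount, ?_⟩
          refine le_antisymm (hMle _ hDscount) ?_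
          by_contra hcon
          push_neg at hcon
          have hgap : M - ν (⋃ C ∈ ⋃ j, (Ds j).1, A k C) ≠ 0 := by
            rw [← pos_iff_ne_zero, tsub_pos_iff_lt]
            exact hcon
          obtain ⟨m, hm⟩ := ENNReal.exists_inv_nat_lt hgap
          have hmono : ν (⋃ C ∈ (Ds m).1, A k C) ≤ ν (⋃ C ∈ ⋃ j, (Ds j).1, A k C) :=
            measure_mono (biUnion_subset_biUnion_left (subset_iUnion (fun j => (Ds j).1) m))
          have h2 : ((m : ℝ≥0∞) + 1)⁻¹ < M - ν (⋃ C ∈ ⋃ j, (Ds j).1, A k C) :=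
            lt_of_le_of_lt (ENNReal.inv_le_inv.2 le_self_add) hm
          have h3 : M - ((m : ℝ≥0∞) + 1)⁻¹ < ν (⋃ C ∈ ⋃ j, (Ds j).1, A k C) :=
            lt_of_lt_of_le (hDs m) hmono
          have h4 : M < ν (⋃ C ∈ ⋃ j, (Ds j).1, A k C) + ((m : ℝ≥0∞) + 1)⁻¹ :=
            ENNReal.lt_add_of_sub_lt_right (Or.inl hMne) h3
          have h5 : M - ν (⋃ C ∈ ⋃ j, (Ds j).1, A k C) ≤ ((m : ℝ≥0∞) + 1)⁻¹ :=
            tsub_le_iff_left.2 h4.le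
          exact absurd (lt_of_le_of_lt h5 h2) (lt_irrefl _)
      refine ⟨D₀, hD₀c, fun C => ?_⟩
      have hBu : ν ((⋃ C' ∈ D₀, A k C') ∪ A k C) ≤ M := by
        have heq : (⋃ C' ∈ D₀, A k C') ∪ A k C = ⋃ C' ∈ (insert C D₀ : Set ↥𝒞'), A k C' := by
          rw [biUnion_insert]
          rw [union_comm]
        rw [heq]
        exact hMle _ (hD₀c.insert C)
      have hBmeas : MeasurableSet (⋃ C' ∈ D₀, A k C') :=
        MeasurableSet.biUnion hD₀c (fun C' _ => hAmeas k C')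
      have hdecomp : ν ((⋃ C' ∈ D₀, A k C') ∪ A k C) =
          ν (⋃ C' ∈ D₀, A k C') + ν (A k C \ ⋃ C' ∈ D₀, A k C') := by
        rw [← Set.union_diff_self]
        exact measure_union disjoint_sdiff_self_right ((hAmeas k C).diff hBmeas)
      have hsum : ν (⋃ C' ∈ D₀, A k C') + ν (A k C \ ⋃ C' ∈ D₀, A k C')
          ≤ ν (⋃ C' ∈ D₀, A k C') + 0 := by
        rw [add_zero]
        calc ν (⋃ C' ∈ D₀, A k C') + ν (A k C \ ⋃ C' ∈ D₀, A k C')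
            = ν ((⋃ C' ∈ D₀, A k C') ∪ A k C) := hdecomp.symm
          _ ≤ M := hBu
          _ = ν (⋃ C' ∈ D₀, A k C') := hD₀.symm
      exact le_antisymm (ENNReal.le_of_add_le_add_left (measure_ne_top ν _) hsum) zero_le
    choose D hDc hDnull using hmax
    have hZnull : ∀ k : ℕ, ν (⋃ C : ↥𝒞', (A k C \ ⋃ C' ∈ D k, A k C')) = 0 := by
      intro k
      exact ma_null hMA _ ν ↥𝒞' hcard _ (fun C => hDnull k C)
    have hsplit : (⋂ k : ℕ, ⋃ C : ↥𝒞', A k C) ⊆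
        (⋂ k : ℕ, ⋃ C' ∈ D k, A k C') ∪
          (⋃ k : ℕ, ⋃ C : ↥𝒞', (A k C \ ⋃ C' ∈ D k, A k C')) := by
      intro σ hσ
      by_cases hall : ∀ k : ℕ, σ ∈ ⋃ C' ∈ D k, A k C'
      · exact Or.inl (mem_iInter.2 hall)
      · push_neg at hall
        obtain ⟨k, hk⟩ := hall
        obtain ⟨C, hC⟩ := mem_iUnion.1 (mem_iInter.1 hσ k)
        exact Or.inr (mem_iUnion.2 ⟨k, mem_iUnion.2 ⟨C, hC, hk⟩⟩)
    set 𝒟 : Set (Set Ω) := ⋃ k : ℕ, (fun C : ↥𝒞' => (C : Set Ω)) '' (D k) with h𝒟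
    have h𝒟sub : 𝒟 ⊆ 𝒞 := by
      rintro C ⟨_, ⟨k, rfl⟩, ⟨C', hC', rfl⟩⟩
      exact hsub C'.2
    have h𝒟c : 𝒟.Countable := countable_iUnion fun k => ((hDc k).image _)
    have hBsub : (⋂ k : ℕ, ⋃ C' ∈ D k, A k C') ⊆
        {σ : Fin n → Ω | ε ≤ ⨆ C ∈ 𝒟, |empMeas n σ C - (μ C).toReal|} := by
      intro σ hσ
      simp only [mem_setOf_eq]
      refine real_le_of_forall_sub (fun k => ?_)
      obtain ⟨C, hCD, hCA⟩ := mem_iUnion₂.1 (mem_iInter.1 hσ k)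
      refine le_trans (le_of_lt hCA) ?_
      refine hle_sup σ 𝒟 C ?_
      exact mem_iUnion.2 ⟨k, mem_image_of_mem _ hCD⟩
    calc ν {σ : Fin n → Ω | ε ≤ ⨆ C ∈ 𝒞', |empMeas n σ C - (μ C).toReal|}
        = ν (⋂ k : ℕ, ⋃ C : ↥𝒞', A k C) := by rw [hEeq]
      _ ≤ ν ((⋂ k : ℕ, ⋃ C' ∈ D k, A k C') ∪
            (⋃ k : ℕ, ⋃ C : ↥𝒞', (A k C \ ⋃ C' ∈ D k, A k C'))) := measure_mono hsplit
      _ ≤ ν (⋂ k : ℕ, ⋃ C' ∈ D k, A k C') +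
            ν (⋃ k : ℕ, ⋃ C : ↥𝒞', (A k C \ ⋃ C' ∈ D k, A k C')) := measure_union_le _ _
      _ = ν (⋂ k : ℕ, ⋃ C' ∈ D k, A k C') := by
            rw [measure_iUnion_null (fun k => hZnull k), add_zero]
      _ ≤ ν {σ : Fin n → Ω | ε ≤ ⨆ C ∈ 𝒟, |empMeas n σ C - (μ C).toReal|} :=
            measure_mono hBsub
      _ ≤ ENNReal.ofReal δ := hctble 𝒟 h𝒟sub h𝒟c ε hε δ hδ n hn μ hμ
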